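/- arXiv:1402.2760 — 5 statements merged into one kernel-verified Lean document; each statement's English description precedes it below -/
import Mathlib

section
/- If two distinct positive integers λ₁ and λ₂ are transformed by replacing each bit 0 of their binary representation by the block 0011 and each bit 1 by the block 1100, and then appending the suffix 10, then the resulting binary strings λ₁* and λ₂* are distinct and neither is a prefix of the other. -/
/-- `Φ(0) = 0011`, `Φ(1) = 1100`. -/
def phiBlock (b : Bool) : List Bool :=
  if b then [true, true, false, false] else [false, false, true, true]

/-- The modified label: blocks `Φ(cᵢ)` over the bits of the word, followed by the suffix `10`. -/
def modEnc (w : List Bool) : List Bool :=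
  (w.flatMap phiBlock) ++ [true, false]

lemma modEnc_cons (a : Bool) (w : List Bool) :
    modEnc (a :: w) = phiBlock a ++ modEnc w := by
  simp [modEnc, List.flatMap_cons, List.append_assoc]

lemma modEnc_prefix_eq : ∀ w1 w2 : List Bool, modEnc w1 <+: modEnc w2 → w1 = w2 := by
  intro w1
  induction w1 with
  | nil =>
    intro w2 h
    cases w2 with
    | nil => rfl
    | cons b t =>
      exfalso
      rw [modEnc_cons] at h
      cases b <;> simp [modEnc, phiBlock, List.cons_prefix_cons] at h
  | cons a t ih =>
    intro w2 h
    cases w2 with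
    | nil =>
      exfalso
      have hl := h.length_le
      rw [modEnc_cons] at hl
      cases a <;> simp [modEnc, phiBlock] at hl
    | cons b t2 =>
      rw [modEnc_cons, modEnc_cons] at h
      cases a <;> cases b <;>
        simp [phiBlock, List.cons_prefix_cons] at h <;>
        rw [ih _ h]

lemma bits_foldr (n : ℕ) : (Nat.bits n).foldr Nat.bit 0 = n := by
  induction n using Nat.binaryRec' with
  | zero => simp
  | bit b n h ih => rw [Nat.bits_append_bit n b h]; simp [ih]

theorem modified_labels_distinct_and_prefix_free
    (lam1 lam2 : ℕ) (h1 : 0 < lam1) (h2 : 0 < lam2) (hne : lam1 ≠ lam2) :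
    modEnc (Nat.bits lam1) ≠ modEnc (Nat.bits lam2) ∧
    ¬ modEnc (Nat.bits lam1) <+: modEnc (Nat.bits lam2) ∧
    ¬ modEnc (Nat.bits lam2) <+: modEnc (Nat.bits lam1) := by
  have hbits : Nat.bits lam1 ≠ Nat.bits lam2 := by
    intro h
    apply hne
    rw [← bits_foldr lam1, ← bits_foldr lam2, h]
  refine ⟨?_, ?_, ?_⟩
  · intro h; exact hbits (modEnc_prefix_eq _ _ (h ▸ List.prefix_refl _))
  · intro h; exact hbits (modEnc_prefix_eq _ _ h)
  · intro h; exact hbits (modEnc_prefix_eq _ _ h).symm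
end

section
/- Consider two agents on an n-vertex oriented ring which, starting simultaneously, each traverse the ring in the same fixed direction: the agent with label λ makes exactly 2nλ unit steps (possibly with arbitrary finite idle pauses inserted between steps by an adversary) and then stops forever. If the two agents have distinct positive integer labels λ₁ < λ₂, then at some point in time they occupy the same vertex. -/
/-- Number of forward steps made by a token `a` on the oriented ring during the
first `T` rounds. -/
def stepsBy {n : ℕ} (a : ℕ → ZMod n) (T : ℕ) : ℕ :=
  ((Finset.range T).filter (fun t => a (t + 1) = a t + 1)).card

lemma stepsBy_succ {n : ℕ} (a : ℕ → ZMod n) (T : ℕ) :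
    stepsBy a (T + 1) = stepsBy a T + (if a (T + 1) = a T + 1 then 1 else 0) := by
  classical
  unfold stepsBy
  rw [Finset.range_add_one, Finset.filter_insert]
  split
  · rw [Finset.card_insert_of_notMem (by simp)]
  · simp

lemma stepsBy_mono {n : ℕ} (a : ℕ → ZMod n) : Monotone (stepsBy a) := by
  intro s t hst
  exact Finset.card_le_card
    (Finset.filter_subset_filter _ (Finset.range_subset_range.2 hst))

lemma pos_eq {n : ℕ} (hn : 2 ≤ n) (a : ℕ → ZMod n)
    (ha : ∀ t, a (t + 1) = a t ∨ a (t + 1) = a t + 1) (t : ℕ) :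
    a t = a 0 + (stepsBy a t : ZMod n) := by
  haveI : Fact (1 < n) := ⟨hn⟩
  induction t with
  | zero => simp [stepsBy]
  | succ t ih =>
    rw [stepsBy_succ]
    rcases ha t with h | h
    · have hne : ¬ a (t + 1) = a t + 1 := by
        rw [h]
        intro hc
        exact one_ne_zero (left_eq_add.mp hc)
      rw [if_neg hne, add_zero, h, ih]
    · rw [if_pos h, h, ih]
      push_cast
      ring

lemma discrete_ivt (f : ℕ → ℤ) (hstep : ∀ t, f (t + 1) ≤ f t + 1) (T : ℕ) (m : ℤ)
    (h0 : f 0 ≤ m) (hT : m ≤ f T) : ∃ t, f t = m := by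
  induction T with
  | zero => exact ⟨0, le_antisymm h0 hT⟩
  | succ T ih =>
    by_cases h : m ≤ f T
    · exact ih h
    · push_neg at h
      exact ⟨T + 1, by have := hstep T; omega⟩

/-- Two agents on an oriented `n`-ring, each traversing the ring in the same direction,
where the agent with label `λ` makes exactly `2nλ` unit steps (with arbitrary finite
adversarial pauses) and then stops forever. If `λ₁ < λ₂`, the agents meet at a vertex. -/
theorem oriented_ring_rendezvous
    (n : ℕ) (hn : 2 ≤ n) (lam1 lam2 : ℕ) (h1 : 0 < lam1) (hl : lam1 < lam2)
    (a b : ℕ → ZMod n)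
    (ha : ∀ t, a (t + 1) = a t ∨ a (t + 1) = a t + 1)
    (hb : ∀ t, b (t + 1) = b t ∨ b (t + 1) = b t + 1)
    (haLe : ∀ T, stepsBy a T ≤ 2 * n * lam1)
    (hbLe : ∀ T, stepsBy b T ≤ 2 * n * lam2)
    (haEq : ∃ T, stepsBy a T = 2 * n * lam1)
    (hbEq : ∃ T, stepsBy b T = 2 * n * lam2) :
    ∃ t, a t = b t := by
  haveI : NeZero n := ⟨by omega⟩
  obtain ⟨T1, hT1⟩ := haEq
  obtain ⟨T2, hT2⟩ := hbEq
  set T := max T1 T2 with hTdef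
  have hAT : stepsBy a T = 2 * n * lam1 :=
    le_antisymm (haLe T) (hT1 ▸ stepsBy_mono a (le_max_left _ _))
  have hBT : stepsBy b T = 2 * n * lam2 :=
    le_antisymm (hbLe T) (hT2 ▸ stepsBy_mono b (le_max_right _ _))
  set m := (a 0 - b 0).val with hmdef
  have hm : m < n := ZMod.val_lt _
  set f : ℕ → ℤ := fun t => (stepsBy b t : ℤ) - stepsBy a t with hfdef
  have hf0 : f 0 = 0 := by simp [hfdef, stepsBy]
  have hstep : ∀ t, f (t + 1) ≤ f t + 1 := by
    intro t
    have h1 := stepsBy_succ a t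
    have h2 := stepsBy_succ b t
    simp only [hfdef]
    split at h1 <;> split at h2 <;> push_cast [h1, h2] <;> omega
  have hfT : (m : ℤ) ≤ f T := by
    simp only [hfdef, hAT, hBT]
    have : (m : ℤ) < n := by exact_mod_cast hm
    have h2 : (lam1 : ℤ) + 1 ≤ lam2 := by exact_mod_cast hl
    push_cast
    nlinarith [this, h2, (show (0:ℤ) ≤ n by positivity)]
  obtain ⟨t, ht⟩ := discrete_ivt f hstep T m (hf0 ▸ Int.natCast_nonneg m) hfT
  have hnat : stepsBy b t = stepsBy a t + m := by
    simp only [hfdef] at ht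
    omega
  refine ⟨t, ?_⟩
  rw [pos_eq hn a ha t, pos_eq hn b hb t, hnat]
  have hmval : ((m : ℕ) : ZMod n) = a 0 - b 0 := by
    simp [hmdef, ZMod.natCast_val, ZMod.cast_id]
  push_cast
  rw [hmval]
  ring
end

section
/- Define sequences for an agent by t_{k+1} = t_k + p_k + λ(s_{k+1} − s_k) and t'_{k+1} = t'_k + p_k + λ'(s_{k+1} − s_k), where s_k = 2^{k+4}, p_k = 2^{2k+4}, b_k = 3·2^k, and λ > λ' are positive integers. If t'_j < t_j + b_j for some index j, then for all r ≥ j one has t_{r+1} − t'_{r+1} > b_{r+1}. -/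
/-- Key recurrence from Claim 1 of the analysis of Algorithm Graph-RV-BF, with
`s_k = 2^(k+4)`, `p_k = 2^(2k+4)`, `b_k = 3·2^k` and labels `λ > λ' > 0`:
if `t'_j < t_j + b_j`, then `t_{r+1} − t'_{r+1} > b_{r+1}` for all `r ≥ j`. -/
theorem stage_start_gap (lam lam' : ℤ) (h0 : 0 < lam') (hll : lam' < lam)
    (t t' : ℕ → ℤ)
    (ht : ∀ k, t (k + 1) = t k + 2 ^ (2 * k + 4) + lam * (2 ^ (k + 1 + 4) - 2 ^ (k + 4)))
    (ht' : ∀ k, t' (k + 1) = t' k + 2 ^ (2 * k + 4) + lam' * (2 ^ (k + 1 + 4) - 2 ^ (k + 4)))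
    (j : ℕ) (hj : t' j < t j + 3 * 2 ^ j) :
    ∀ r, j ≤ r → t (r + 1) - t' (r + 1) > 3 * 2 ^ (r + 1) := by
  have hd : (1 : ℤ) ≤ lam - lam' := by linarith
  have key : ∀ k, t (k + 1) - t' (k + 1) = (t k - t' k) + (lam - lam') * 2 ^ (k + 4) := by
    intro k
    have h2 : (2 : ℤ) ^ (k + 1 + 4) = 2 * 2 ^ (k + 4) := by
      rw [show k + 1 + 4 = (k + 4) + 1 from by ring, pow_succ]; ring
    rw [ht k, ht' k, h2]; ring
  intro r hr
  induction r, hr using Nat.le_induction with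
  | base =>
      have h1 := key j
      have hp : (0 : ℤ) < 2 ^ j := by positivity
      have : (2 : ℤ) ^ (j + 4) = 16 * 2 ^ j := by rw [pow_add]; ring
      have h3 : (2 : ℤ) ^ (j + 1) = 2 * 2 ^ j := by rw [pow_succ]; ring
      nlinarith [mul_le_mul_of_nonneg_right hd (le_of_lt (pow_pos (by norm_num : (0:ℤ)<2) (j+4)))]
  | succ n hn ih =>
      have h1 := key (n + 1)
      have hp : (0 : ℤ) < 2 ^ (n + 1 + 4) := by positivity
      have h2 : (2 : ℤ) ^ (n + 1 + 4) = 16 * 2 ^ (n + 1) := by rw [pow_add]; ring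
      have h3 : (2 : ℤ) ^ (n + 1 + 1) = 2 * 2 ^ (n + 1) := by rw [pow_succ]; ring
      nlinarith [mul_le_mul_of_nonneg_right hd (le_of_lt hp)]
end

section
/- A basic walk in a tree with n vertices, which leaves the starting vertex by port 0 and, upon entering a vertex of degree d by port i, leaves by port (i+1) mod d, traverses each edge exactly twice (once in each direction) and returns to the starting vertex after exactly 2(n−1) edge traversals. -/
open SimpleGraph

namespace BasicWalkAux

lemma finRotate_val' {n : ℕ} (i : Fin n) : (finRotate n i).val = (i.val + 1) % n := by
  cases n with
  | zero => exact i.elim0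
  | succ n =>
    rw [finRotate_succ_apply, Fin.add_def, Fin.val_one', Nat.add_mod i.val 1 (n+1),
      Nat.mod_eq_of_lt i.isLt]

lemma mod_add_ne {p j d : ℕ} (hp : p < d) (hj0 : 0 < j) (hjd : j < d) :
    (p + j) % d ≠ p := by
  rcases lt_or_ge (p + j) d with h | h
  · rw [Nat.mod_eq_of_lt h]; omega
  · rw [Nat.mod_eq_sub_mod h, Nat.mod_eq_of_lt (by omega)]; omega

variable {V : Type} [Fintype V] [DecidableEq V]
variable (G : SimpleGraph V) [DecidableRel G.Adj]
variable (port : ∀ v : V, G.neighborSet v ≃ Fin (G.degree v))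

/-- Rotation on the neighbors of a vertex, given by the port numbering. -/
def sig (v : V) (y : G.neighborSet v) : G.neighborSet v :=
  (port v).symm (finRotate _ (port v y))

lemma sig_inj (v : V) : Function.Injective (sig G port v) := by
  intro y z h
  have h1 := (port v).symm.injective h
  have h2 := (finRotate _).injective h1
  exact (port v).injective h2

lemma sig_port (v : V) (y : G.neighborSet v) :
    (port v (sig G port v y)).val = ((port v y).val + 1) % G.degree v := by
  rw [sig, Equiv.apply_symm_apply, finRotate_val']

lemma sig_iter_port (v : V) (y : G.neighborSet v) (j : ℕ) :
    (port v ((sig G port v)^[j] y)).val = ((port v y).val + j) % G.degree v := by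
  induction j with
  | zero => simp [Nat.mod_eq_of_lt (port v y).isLt]
  | succ j ih =>
    rw [Function.iterate_succ_apply', sig_port, ih, Nat.mod_add_mod, ← Nat.add_assoc]

lemma sig_iter_deg (v : V) (y : G.neighborSet v) :
    (sig G port v)^[G.degree v] y = y := by
  apply (port v).injective
  apply Fin.ext
  rw [sig_iter_port, Nat.add_mod_right, Nat.mod_eq_of_lt (port v y).isLt]

/-- The one-step map on darts given by the basic-walk rule. -/
def step (d : G.Dart) : G.Dart :=
  ⟨(d.snd, (sig G port d.snd ⟨d.fst, d.adj.symm⟩ : G.neighborSet d.snd).val),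
   (sig G port d.snd ⟨d.fst, d.adj.symm⟩).property⟩

lemma step_inj : Function.Injective (step G port) := by
  rintro ⟨⟨a, b⟩, hab⟩ ⟨⟨a', b'⟩, hab'⟩ h
  have hb : b = b' := congrArg (fun d => d.toProd.1) h
  subst hb
  have hsig : sig G port b ⟨a, hab.symm⟩ = sig G port b ⟨a', hab'.symm⟩ :=
    Subtype.ext (congrArg (fun d => d.toProd.2) h)
  have := sig_inj G port b hsig
  have ha : a = a' := congrArg Subtype.val this
  subst ha
  rfl

/-- The dart out of `d.snd` obtained by rotating `j` times starting from `d.fst`. -/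
def nb (d : G.Dart) (j : ℕ) : G.Dart :=
  ⟨(d.snd, ((sig G port d.snd)^[j] ⟨d.fst, d.adj.symm⟩ : G.neighborSet d.snd).val),
   ((sig G port d.snd)^[j] ⟨d.fst, d.adj.symm⟩).property⟩

lemma step_eq_nb_one (d : G.Dart) : step G port d = nb G port d 1 := by
  simp only [nb, Function.iterate_one]; rfl

lemma nb_deg (d : G.Dart) : nb G port d (G.degree d.snd) = d.symm := by
  apply Dart.ext
  show (d.snd, _) = d.toProd.swap
  rw [sig_iter_deg]
  cases d with
  | mk p h => cases p; rfl

/-- The set of vertices reachable from the head of `d` after deleting the edge of `d`. -/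
def S (d : G.Dart) : Set V := {z | (G.deleteEdges {d.edge}).Reachable d.snd z}

noncomputable def mu (d : G.Dart) : ℕ := (S G d).ncard

lemma snd_mem_S (d : G.Dart) : d.snd ∈ S G d := Reachable.refl _

variable (hT : G.IsTree)
include hT

lemma bridge_of_adj {u v : V} (h : G.Adj u v) :
    ¬ (G.deleteEdges {s(u, v)}).Reachable u v := by
  have hb := (isAcyclic_iff_forall_adj_isBridge.mp hT.2) h
  exact isBridge_iff.mp hb

lemma fst_not_mem_S (d : G.Dart) : d.fst ∉ S G d := by
  intro hmem
  have hedge : d.edge = s(d.fst, d.snd) := rfl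
  rw [S, Set.mem_setOf_eq, hedge] at hmem
  exact bridge_of_adj G hT d.adj hmem.symm

lemma mu_lt (d : G.Dart) (x : V) (hvx : G.Adj d.snd x) (hxu : x ≠ d.fst) :
    mu G (⟨(d.snd, x), hvx⟩ : G.Dart) < mu G d := by
  have hsub : S G (⟨(d.snd, x), hvx⟩ : G.Dart) ⊆ S G d := by
    intro z hz
    rw [S, Set.mem_setOf_eq] at hz ⊢
    obtain ⟨q⟩ := hz
    -- q : walk from x to z in G minus the edge (d.snd, x)
    have hq1 : ∀ f ∈ q.edges, f ∈ G.edgeSet := by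
      intro f hf
      have := q.edges_subset_edgeSet hf
      rw [edgeSet_deleteEdges] at this
      exact this.1
    have hq2 : ∀ f ∈ q.edges, f ≠ s(d.snd, x) := by
      intro f hf
      have := q.edges_subset_edgeSet hf
      rw [edgeSet_deleteEdges] at this
      simpa using this.2
    have hq1' : ∀ f ∈ (q.transfer G hq1).edges, f ≠ s(d.snd, x) := by
      intro f hf
      exact hq2 f (by rwa [Walk.edges_transfer] at hf)
    set p : G.Walk x z := (q.transfer G hq1).bypass with hp
    have hpp : p.IsPath := Walk.bypass_isPath _
    have hpe : ∀ f ∈ p.edges, f ≠ s(d.snd, x) := by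
      intro f hf
      exact hq1' f (Walk.edges_bypass_subset _ hf)
    have hvp : d.snd ∉ p.support := by
      intro hvs
      have htp : (p.takeUntil d.snd hvs).IsPath := hpp.takeUntil hvs
      have hsingle : (Walk.cons hvx.symm Walk.nil : G.Walk x d.snd).IsPath := by
        simp [Walk.isPath_def, hvx.ne']
      have huniq := hT.existsUnique_path x d.snd
      have heq : p.takeUntil d.snd hvs = Walk.cons hvx.symm Walk.nil :=
        huniq.unique htp hsingle
      have hedge : s(x, d.snd) ∈ (p.takeUntil d.snd hvs).edges := by
        rw [heq]; simp
      have := p.edges_takeUntil_subset hvs hedge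
      exact hpe _ this (Sym2.eq_swap)
    have hWe : ∀ f ∈ (Walk.cons hvx p).edges, f ∉ ({d.edge} : Set (Sym2 V)) := by
      intro f hf
      simp only [Set.mem_singleton_iff]
      intro hfe
      have hedge : d.edge = s(d.fst, d.snd) := rfl
      rw [Walk.edges_cons, List.mem_cons] at hf
      rcases hf with hf | hf
      · subst hf
        rw [hedge, Sym2.eq_iff] at hfe
        rcases hfe with ⟨h1, h2⟩ | ⟨h1, h2⟩
        · exact d.snd_ne_fst h1
        · exact hxu h2
      · subst hfe
        rw [hedge] at hf
        exact hvp (p.snd_mem_support_of_mem_edges hf)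
    exact ⟨(Walk.cons hvx p).toDeleteEdges {d.edge} hWe⟩
  have hv_in : d.snd ∈ S G d := snd_mem_S G d
  have hv_notin : d.snd ∉ S G (⟨(d.snd, x), hvx⟩ : G.Dart) :=
    fst_not_mem_S G hT (⟨(d.snd, x), hvx⟩ : G.Dart)
  have hss : S G (⟨(d.snd, x), hvx⟩ : G.Dart) ⊂ S G d :=
    ⟨hsub, fun hc => hv_notin (hc hv_in)⟩
  exact Set.ncard_lt_ncard hss (Set.toFinite _)

lemma key : ∀ (n : ℕ) (d : G.Dart), mu G d ≤ n →
    ∀ j, 1 ≤ j → j ≤ G.degree d.snd →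
    ∃ m, (step G port)^[m] d = nb G port d j := by
  intro n
  induction n using Nat.strong_induction_on with
  | _ n IH =>
    intro d hmu j hj1 hjd
    induction j with
    | zero => omega
    | succ j IHj =>
      rcases Nat.eq_zero_or_pos j with hj0 | hj0
      · subst hj0
        exact ⟨1, by rw [Function.iterate_one, step_eq_nb_one]⟩
      · obtain ⟨m, hm⟩ := IHj (by omega) (by omega)
        set e : G.Dart := nb G port d j with hedef
        have hjlt : j < G.degree d.snd := by omega
        have hne : (sig G port d.snd)^[j] ⟨d.fst, d.adj.symm⟩ ≠ ⟨d.fst, d.adj.symm⟩ := by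
          intro hc
          have h1 := sig_iter_port G port d.snd ⟨d.fst, d.adj.symm⟩ j
          rw [hc] at h1
          exact mod_add_ne (port d.snd ⟨d.fst, d.adj.symm⟩).isLt hj0 hjlt h1.symm
        have hxu : ((sig G port d.snd)^[j] ⟨d.fst, d.adj.symm⟩ :
            G.neighborSet d.snd).val ≠ d.fst := by
          intro hc; exact hne (Subtype.ext hc)
        have hlt : mu G e < mu G d := mu_lt G hT d _ _ hxu
        have hdegpos : 1 ≤ G.degree e.snd :=
          (G.degree_pos_iff_exists_adj e.snd).mpr ⟨e.fst, e.adj.symm⟩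
        obtain ⟨m', hm'⟩ := IH (mu G e) (by omega) e le_rfl (G.degree e.snd) hdegpos le_rfl
        rw [nb_deg] at hm'
        have hstep : step G port e.symm = nb G port d (j + 1) := by
          apply Dart.ext
          apply Prod.ext
          · rfl
          · show (sig G port d.snd ⟨e.snd, _⟩ : G.neighborSet d.snd).val = _
            have hsub : (⟨e.snd, e.symm.adj.symm⟩ : G.neighborSet d.snd) =
                (sig G port d.snd)^[j] ⟨d.fst, d.adj.symm⟩ := Subtype.ext rfl
            rw [hsub]
            show (sig G port d.snd ((sig G port d.snd)^[j] _)).val = _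
            rw [← Function.iterate_succ_apply' (sig G port d.snd)]
            rfl
        refine ⟨m + (m' + 1), ?_⟩
        rw [Nat.add_comm m (m' + 1), Function.iterate_add_apply, hm,
          Function.iterate_succ_apply', hm', hstep]

lemma rev (d : G.Dart) : ∃ m, (step G port)^[m] d = d.symm := by
  have hdeg : 1 ≤ G.degree d.snd :=
    (G.degree_pos_iff_exists_adj d.snd).mpr ⟨d.fst, d.adj.symm⟩
  obtain ⟨m, hm⟩ := key G port hT (mu G d) d le_rfl (G.degree d.snd) hdeg le_rfl
  rw [nb_deg] at hm
  exact ⟨m, hm⟩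

lemma all_out (d : G.Dart) (x : V) (h : G.Adj d.snd x) :
    ∃ m, (step G port)^[m] d = ⟨(d.snd, x), h⟩ := by
  set v := d.snd with hv
  set y : G.neighborSet v := ⟨d.fst, d.adj.symm⟩ with hy
  set z : G.neighborSet v := ⟨x, h⟩ with hz
  set p := (port v y).val with hp
  set q := (port v z).val with hq
  set dd := G.degree v with hdd
  have hpd : p < dd := (port v y).isLt
  have hqd : q < dd := (port v z).isLt
  have hddpos : 0 < dd := by omega
  -- choose j with 1 ≤ j ≤ dd and (p + j) % dd = q
  obtain ⟨j, hj1, hjd, hjq⟩ : ∃ j, 1 ≤ j ∧ j ≤ dd ∧ (p + j) % dd = q := by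
    rcases eq_or_ne q p with hqp | hqp
    · exact ⟨dd, hddpos, le_rfl, by rw [Nat.add_mod_right, Nat.mod_eq_of_lt hpd, hqp]⟩
    · refine ⟨(q + dd - p) % dd, ?_, le_of_lt (Nat.mod_lt _ hddpos), ?_⟩
      · rcases Nat.eq_zero_or_pos ((q + dd - p) % dd) with h0 | h0
        · exfalso
          have hdvd : dd ∣ (q + dd - p) := Nat.dvd_of_mod_eq_zero h0
          obtain ⟨c, hc⟩ := hdvd
          match c with
          | 0 => omega
          | 1 => omega
          | (c + 2) =>
            have h2 : dd * 2 ≤ dd * (c + 2) := Nat.mul_le_mul_left dd (by omega)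
            omega
        · omega
      · have : (p + (q + dd - p) % dd) % dd = (p + (q + dd - p)) % dd := by
          rw [Nat.add_mod, Nat.mod_mod_of_dvd, ← Nat.add_mod]
          exact dvd_refl dd
        rw [this]
        have hple : p ≤ q + dd := by omega
        have : p + (q + dd - p) = q + dd := by omega
        rw [this, Nat.add_mod_right, Nat.mod_eq_of_lt hqd]
  obtain ⟨m, hm⟩ := key G port hT (mu G d) d le_rfl j hj1 hjd
  refine ⟨m, ?_⟩
  rw [hm]
  apply Dart.ext
  apply Prod.ext
  · rfl
  · show ((sig G port v)^[j] y : G.neighborSet v).val = x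
    have hport : (port v ((sig G port v)^[j] y)) = port v z := by
      apply Fin.ext
      rw [sig_iter_port]
      exact hjq
    have := (port v).injective hport
    rw [this]

lemma reach_aux : ∀ {a b : V} (_ : G.Walk a b) (d : G.Dart), d.snd = a →
    ∀ (e : G.Dart), e.fst = b → ∃ m, (step G port)^[m] d = e := by
  intro a b p
  induction p with
  | nil =>
    intro d hd e he
    have hadj : G.Adj d.snd e.snd := by
      rw [hd, ← he]; exact e.adj
    obtain ⟨m, hm⟩ := all_out G port hT d e.snd hadj
    refine ⟨m, ?_⟩
    rw [hm]
    apply Dart.ext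
    apply Prod.ext
    · show d.snd = e.fst
      rw [hd, he]
    · rfl
  | cons h q ih =>
    rename_i a' c b'
    intro d hd e he
    have h2 : G.Adj d.snd c := by rw [hd]; exact h
    obtain ⟨m1, hm1⟩ := all_out G port hT d c h2
    obtain ⟨m2, hm2⟩ := ih (⟨(d.snd, c), h2⟩ : G.Dart) rfl e he
    refine ⟨m2 + m1, ?_⟩
    rw [Function.iterate_add_apply, hm1, hm2]

lemma reach (d e : G.Dart) : ∃ m, (step G port)^[m] d = e := by
  obtain ⟨p⟩ := hT.isConnected.preconnected d.snd e.fst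
  exact reach_aux G port hT p d rfl e rfl

end BasicWalkAux

open BasicWalkAux

/-- The basic walk in a port-labeled tree: leaving the start by port 0 and, upon entering
a vertex of degree `d` by port `i`, leaves by port `(i+1) mod d`, traverses each edge
exactly twice (once in each direction) and returns to the start after exactly `2(n−1)`
edge traversals. -/
theorem basic_walk_euler_tour
    {V : Type} [Fintype V] [DecidableEq V]
    (G : SimpleGraph V) [DecidableRel G.Adj] (hT : G.IsTree)
    (port : ∀ v : V, G.neighborSet v ≃ Fin (G.degree v))
    (w : ℕ → V)
    (hadj : ∀ k, G.Adj (w k) (w (k + 1)))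
    (hstart : (port (w 0) ⟨w 1, hadj 0⟩).val = 0)
    (hrule : ∀ k, (port (w (k + 1)) ⟨w (k + 2), hadj (k + 1)⟩).val =
      ((port (w (k + 1)) ⟨w k, (hadj k).symm⟩).val + 1) % G.degree (w (k + 1))) :
    w (2 * (Fintype.card V - 1)) = w 0 ∧
    ∀ u v : V, G.Adj u v →
      ∃! k, k < 2 * (Fintype.card V - 1) ∧ w k = u ∧ w (k + 1) = v := by
  classical
  set f := step G port with hf
  set d0 : G.Dart := ⟨(w 0, w 1), hadj 0⟩ with hd0
  -- the walk follows iterated `step`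
  have hdart : ∀ k, f^[k] d0 = ⟨(w k, w (k + 1)), hadj k⟩ := by
    intro k
    induction k with
    | zero => rfl
    | succ k ih =>
      rw [Function.iterate_succ_apply', ih]
      apply SimpleGraph.Dart.ext
      apply Prod.ext
      · rfl
      · show (sig G port (w (k + 1)) ⟨w k, (hadj k).symm⟩ :
            G.neighborSet (w (k + 1))).val = w (k + 2)
        have h1 : port (w (k + 1)) ⟨w (k + 2), (hadj (k + 1))⟩ =
            port (w (k + 1)) (sig G port (w (k + 1)) ⟨w k, (hadj k).symm⟩) := by
          apply Fin.ext
          rw [sig_port]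
          exact hrule k
        have h2 := (port (w (k + 1))).injective h1
        exact (congrArg Subtype.val h2).symm
  set N := Fintype.card G.Dart with hN
  -- existence of a positive period
  have hper : ∃ q, 0 < q ∧ f^[q] d0 = d0 := by
    have hcard : Fintype.card G.Dart < Fintype.card (Fin (N + 1)) := by
      simp [hN]
    obtain ⟨i, j, hne, heq⟩ :=
      Fintype.exists_ne_map_eq_of_card_lt (fun i : Fin (N + 1) => f^[i.val] d0) hcard
    rcases Ne.lt_or_gt (fun h : i.val = j.val => hne (Fin.ext h)) with hij | hij
    · refine ⟨j.val - i.val, by omega, ?_⟩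
      have : f^[i.val] (f^[j.val - i.val] d0) = f^[i.val] d0 := by
        rw [← Function.iterate_add_apply]
        rw [show i.val + (j.val - i.val) = j.val by omega]
        exact heq.symm
      exact (step_inj G port).iterate i.val this
    · refine ⟨i.val - j.val, by omega, ?_⟩
      have : f^[j.val] (f^[i.val - j.val] d0) = f^[j.val] d0 := by
        rw [← Function.iterate_add_apply]
        rw [show j.val + (i.val - j.val) = i.val by omega]
        exact heq
      exact (step_inj G port).iterate j.val this
  set p := Nat.find hper with hpdef
  obtain ⟨hppos, hpfix⟩ := Nat.find_spec hper
  have hmul : ∀ q, f^[p * q] d0 = d0 := by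
    intro q
    induction q with
    | zero => rfl
    | succ q ih =>
      rw [Nat.mul_succ, Function.iterate_add_apply, hpfix, ih]
  have hmod : ∀ m, f^[m] d0 = f^[m % p] d0 := by
    intro m
    conv_lhs => rw [← Nat.mod_add_div m p]
    rw [Function.iterate_add_apply, hmul]
  have hinj : ∀ i j, i < p → j < p → f^[i] d0 = f^[j] d0 → i = j := by
    have key : ∀ i j, i < j → j < p → f^[i] d0 = f^[j] d0 → False := by
      intro i j hij hjp heq
      have : f^[i] (f^[j - i] d0) = f^[i] d0 := by
        rw [← Function.iterate_add_apply]
        rw [show i + (j - i) = j by omega]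
        exact heq.symm
      have hfix : f^[j - i] d0 = d0 := (step_inj G port).iterate i this
      exact Nat.find_min hper (show j - i < p by omega) ⟨by omega, hfix⟩
    intro i j hi hj heq
    rcases lt_trichotomy i j with h | h | h
    · exact absurd heq (fun he => key i j h hj he)
    · exact h
    · exact absurd heq.symm (fun he => key j i h hi he)
  have hsurj : ∀ e : G.Dart, ∃ k, k < p ∧ f^[k] d0 = e := by
    intro e
    obtain ⟨m, hm⟩ := reach G port hT d0 e
    exact ⟨m % p, Nat.mod_lt _ hppos, by rw [← hmod]; exact hm⟩
  have hpN : p = N := by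
    have hbij : Function.Bijective (fun i : Fin p => f^[i.val] d0) := by
      constructor
      · intro i j hij
        exact Fin.ext (hinj i.val j.val i.isLt j.isLt hij)
      · intro e
        obtain ⟨k, hk, hke⟩ := hsurj e
        exact ⟨⟨k, hk⟩, hke⟩
    have := Fintype.card_of_bijective hbij
    rwa [Fintype.card_fin] at this
  have hN2 : N = 2 * (Fintype.card V - 1) := by
    rw [hN, SimpleGraph.dart_card_eq_twice_card_edges]
    have := hT.card_edgeFinset
    omega
  constructor
  · have h1 : f^[2 * (Fintype.card V - 1)] d0 = d0 := by
      rw [hmod, ← hN2, ← hpN, Nat.mod_self]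
      rfl
    have h2 := hdart (2 * (Fintype.card V - 1))
    rw [h1] at h2
    exact (congrArg (fun d : G.Dart => d.toProd.1) h2).symm
  · intro u v huv
    obtain ⟨k, hk, hke⟩ := hsurj ⟨(u, v), huv⟩
    have hkN : k < 2 * (Fintype.card V - 1) := by omega
    have hku : w k = u ∧ w (k + 1) = v := by
      have := hdart k
      rw [hke] at this
      exact ⟨(congrArg (fun d : G.Dart => d.toProd.1) this).symm,
        (congrArg (fun d : G.Dart => d.toProd.2) this).symm⟩
    refine ⟨k, ⟨hkN, hku.1, hku.2⟩, ?_⟩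
    rintro k' ⟨hk'N, h1, h2⟩
    have hk'e : f^[k'] d0 = ⟨(u, v), huv⟩ := by
      rw [hdart k']
      apply SimpleGraph.Dart.ext
      exact Prod.ext h1 h2
    exact hinj k' k (by omega) hk (by rw [hk'e, hke])
end

section
/- Two tokens performing the same cyclic Euler tour of a tree (induced by basic walks from two different starting vertices), each required to advance at least once in every window of W consecutive rounds for some fixed W, will occupy the same vertex at the same time provided the token with larger label makes at least one full tour of the Euler cycle after the other token has permanently stopped. -/
/-- Number of forward moves of a token `a` on the Euler cycle during the first `T` rounds. -/
def advancesBy {N : ℕ} (a : ℕ → ZMod N) (T : ℕ) : ℕ :=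
  ((Finset.range T).filter (fun t => a (t + 1) = a t + 1)).card


lemma advancesBy_succ {N : ℕ} (a : ℕ → ZMod N) (T : ℕ) :
    advancesBy a (T + 1) = advancesBy a T + (if a (T + 1) = a T + 1 then 1 else 0) := by
  unfold advancesBy
  rw [Finset.range_add_one, Finset.filter_insert]
  split
  · rw [Finset.card_insert_of_notMem (by simp)]
  · simp

lemma advancesBy_mono {N : ℕ} (a : ℕ → ZMod N) {S T : ℕ} (h : S ≤ T) :
    advancesBy a S ≤ advancesBy a T :=
  Finset.card_le_card (Finset.filter_subset_filter _ (Finset.range_subset_range.2 h))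

lemma advancesBy_succ_le {N : ℕ} (a : ℕ → ZMod N) (T : ℕ) :
    advancesBy a (T + 1) ≤ advancesBy a T + 1 := by
  rw [advancesBy_succ]; split <;> omega

lemma pos_formula {N : ℕ} (a : ℕ → ZMod N)
    (ha : ∀ t, a (t + 1) = a t ∨ a (t + 1) = a t + 1) :
    ∀ t, a t = a 0 + (advancesBy a t : ZMod N) := by
  intro t
  induction t with
  | zero => simp [advancesBy]
  | succ t ih =>
    rw [advancesBy_succ]
    by_cases h : a (t + 1) = a t + 1
    · rw [if_pos h, h, ih]; push_cast; ring
    · rw [if_neg h, (ha t).resolve_right h, ih]; simp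

lemma ivt (f : ℕ → ℤ) (hf : ∀ t, f (t + 1) ≤ f t + 1) (h0 : f 0 = 0)
    (T : ℕ) (k : ℤ) (hk : 0 ≤ k) (hT : k ≤ f T) : ∃ t, f t = k := by
  classical
  have hP : ∃ t, k ≤ f t := ⟨T, hT⟩
  set t := Nat.find hP with htdef
  have ht : k ≤ f t := Nat.find_spec hP
  rcases Nat.eq_zero_or_pos t with h | h
  · refine ⟨0, ?_⟩
    rw [h] at ht
    omega
  · obtain ⟨s, hs⟩ : ∃ s, t = s + 1 := ⟨t - 1, by omega⟩
    have hns : ¬ k ≤ f s := Nat.find_min hP (by omega)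
    have := hf s
    rw [hs] at ht
    exact ⟨s + 1, by omega⟩

/-- Two tokens traverse (forward only) the directed Euler cycle of length `2(n−1)`
induced by basic walks of a tree on `n` vertices. Token `A` (label `λ₁`) makes exactly
`2λ₁(n−1)` forward moves and stops; token `B` (label `λ₂ > λ₁`) makes exactly
`2λ₂(n−1)` forward moves; each token, while not yet finished, advances at least once in
every window of `W` consecutive rounds. Then at some time both tokens occupy the same
node of the cycle. -/
theorem euler_cycle_tokens_meet
    (n : ℕ) (hn : 2 ≤ n) (W : ℕ) (hW : 0 < W)
    (lam1 lam2 : ℕ) (h1 : 0 < lam1) (hl : lam1 < lam2)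
    (a b : ℕ → ZMod (2 * (n - 1)))
    (ha : ∀ t, a (t + 1) = a t ∨ a (t + 1) = a t + 1)
    (hb : ∀ t, b (t + 1) = b t ∨ b (t + 1) = b t + 1)
    (haLe : ∀ T, advancesBy a T ≤ 2 * lam1 * (n - 1))
    (hbLe : ∀ T, advancesBy b T ≤ 2 * lam2 * (n - 1))
    (haEq : ∃ T, advancesBy a T = 2 * lam1 * (n - 1))
    (hbEq : ∃ T, advancesBy b T = 2 * lam2 * (n - 1))
    (haWin : ∀ t, advancesBy a t < 2 * lam1 * (n - 1) →
      ∃ s, t ≤ s ∧ s < t + W ∧ a (s + 1) = a s + 1)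
    (hbWin : ∀ t, advancesBy b t < 2 * lam2 * (n - 1) →
      ∃ s, t ≤ s ∧ s < t + W ∧ b (s + 1) = b s + 1) :
    ∃ t, a t = b t := by
  haveI : NeZero (2 * (n - 1)) := ⟨by omega⟩
  obtain ⟨Ta, hTa⟩ := haEq
  obtain ⟨Tb, hTb⟩ := hbEq
  set T := max Ta Tb with hTdef
  have hAa : advancesBy a T = 2 * lam1 * (n - 1) :=
    le_antisymm (haLe T) (hTa ▸ advancesBy_mono a (le_max_left Ta Tb))
  have hAb : advancesBy b T = 2 * lam2 * (n - 1) :=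
    le_antisymm (hbLe T) (hTb ▸ advancesBy_mono b (le_max_right Ta Tb))
  set d := (a 0 - b 0).val with hddef
  have hd : (d : ZMod (2 * (n - 1))) = a 0 - b 0 := by
    simp [hddef, ZMod.natCast_val, ZMod.cast_id]
  have hdlt : d < 2 * (n - 1) := ZMod.val_lt _
  set f : ℕ → ℤ := fun t => (advancesBy b t : ℤ) - (advancesBy a t : ℤ) with hfdef
  have hf : ∀ t, f (t + 1) ≤ f t + 1 := by
    intro t
    have h1 := advancesBy_succ_le b t
    have h2 := advancesBy_mono a (Nat.le_add_right t 1)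
    simp only [hfdef]
    push_cast
    omega
  have h0 : f 0 = 0 := by simp [hfdef, advancesBy]
  have hgap : 2 * lam1 * (n - 1) + 2 * (n - 1) ≤ 2 * lam2 * (n - 1) := by
    have : lam1 + 1 ≤ lam2 := hl
    nlinarith
  have hT : (d : ℤ) ≤ f T := by
    have h := hgap
    rw [← hAa, ← hAb] at h
    simp only [hfdef]
    omega
  obtain ⟨t, hft⟩ := ivt f hf h0 T d (by positivity) hT
  have hnat : advancesBy b t = advancesBy a t + d := by
    simp only [hfdef] at hft; omega
  refine ⟨t, ?_⟩
  rw [pos_formula a ha t, pos_formula b hb t, hnat]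
  push_cast
  rw [hd]
  ring
end
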